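/- Let y = (y₁,…,y_N) be defined from a seed (x, ε, B) by y_j = ε_j · ∏_k x_k^{b_{kj}}. Then the mutation of the seed in direction k (with x̃_k = (ε_k/(1⊕ε_k))·x_k⁻¹·∏_{b_{jk}>0} x_j^{b_{jk}} + (1/(1⊕ε_k))·x_k⁻¹·∏_{b_{jk}<0} x_j^{−b_{jk}}, the coefficient mutation rule, and the matrix mutation rule) induces on y exactly the y-variable mutation rule: ỹ_k = y_k⁻¹, ỹ_i = y_i·(y_k/(1+y_k))^{b_{ki}} for b_{ki} ≥ 0, and ỹ_i = y_i·(1+y_k)^{−b_{ki}} for b_{ki} ≤ 0 (i ≠ k). -/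

import Mathlib

open Finset

/-- Matrix mutation in direction `k`. -/
def mutB {N : ℕ} (B : Fin N → Fin N → ℤ) (k : Fin N) : Fin N → Fin N → ℤ :=
  fun i j => if i = k ∨ j = k then -B i j
    else B i j + (|B i k| * B k j + B i k * |B k j|) / 2

/-- The `y`-variables attached to a seed `(x, ε, B)`: `y_j = ε_j · ∏_k x_k^{b_{kj}}`. -/
noncomputable def yOf {N : ℕ} {K : Type*} [Field K]
    (B : Fin N → Fin N → ℤ) (ε x : Fin N → K) : Fin N → K :=
  fun j => ε j * ∏ m, x m ^ (B m j)

/-- Mutation of the cluster variables in direction `k` (with ambient addition `⊕ = oplus`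
on coefficients):
`x̃_k = (ε_k/(1⊕ε_k))·x_k⁻¹·∏_{b_{jk}>0} x_j^{b_{jk}} + (1/(1⊕ε_k))·x_k⁻¹·∏_{b_{jk}<0} x_j^{−b_{jk}}`. -/
noncomputable def mutX {N : ℕ} {K : Type*} [Field K] (oplus : K → K → K)
    (B : Fin N → Fin N → ℤ) (ε x : Fin N → K) (k : Fin N) : Fin N → K :=
  fun i => if i = k then
      (ε k / oplus 1 (ε k)) * (x k)⁻¹ *
        ∏ j, (if 0 < B j k then x j ^ (B j k).toNat else 1)
      + (1 / oplus 1 (ε k)) * (x k)⁻¹ *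
        ∏ j, (if B j k < 0 then x j ^ (-(B j k)).toNat else 1)
    else x i

/-- Mutation of the coefficients in direction `k`:
`ε̃_k = ε_k⁻¹`, `ε̃_i = ε_i·(ε_k/(1⊕ε_k))^{b_{ki}}` if `b_{ki} ≥ 0` and
`ε̃_i = ε_i·(1⊕ε_k)^{−b_{ki}}` if `b_{ki} ≤ 0`. -/
noncomputable def mutE {N : ℕ} {K : Type*} [Field K] (oplus : K → K → K)
    (B : Fin N → Fin N → ℤ) (ε : Fin N → K) (k : Fin N) : Fin N → K :=
  fun i => if i = k then (ε k)⁻¹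
    else if 0 ≤ B k i then ε i * (ε k / oplus 1 (ε k)) ^ (B k i).toNat
    else ε i * (oplus 1 (ε k)) ^ (-(B k i)).toNat

/-- Seed mutation induces exactly the `y`-variable mutation rule:
`ỹ_k = y_k⁻¹`, `ỹ_i = y_i·(y_k/(1+y_k))^{b_{ki}}` for `b_{ki} ≥ 0`, and
`ỹ_i = y_i·(1+y_k)^{−b_{ki}}` for `b_{ki} ≤ 0` (`i ≠ k`). -/
theorem y_mutation_from_seed_mutation {N : ℕ} {K : Type*} [Field K]
    (oplus : K → K → K) (B : Fin N → Fin N → ℤ)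
    (hskew : ∀ i j, B i j = -B j i) (ε x : Fin N → K) (k : Fin N)
    (hx : ∀ i, x i ≠ 0) (hε : ∀ i, ε i ≠ 0)
    (hop : oplus 1 (ε k) ≠ 0)
    (h1y : 1 + yOf B ε x k ≠ 0) :
    yOf (mutB B k) (mutE oplus B ε k) (mutX oplus B ε x k) k = (yOf B ε x k)⁻¹ ∧
    (∀ i, i ≠ k →
      (0 ≤ B k i →
        yOf (mutB B k) (mutE oplus B ε k) (mutX oplus B ε x k) i =
          yOf B ε x i * (yOf B ε x k / (1 + yOf B ε x k)) ^ (B k i).toNat) ∧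
      (B k i ≤ 0 →
        yOf (mutB B k) (mutE oplus B ε k) (mutX oplus B ε x k) i =
          yOf B ε x i * (1 + yOf B ε x k) ^ (-(B k i)).toNat)) := by
  classical
  set P : K := ∏ j, (if 0 < B j k then x j ^ (B j k).toNat else 1) with hPdef
  set M : K := ∏ j, (if B j k < 0 then x j ^ (-(B j k)).toNat else 1) with hMdef
  have hBkk : B k k = 0 := by have := hskew k k; omega
  have hP : P ≠ 0 := by
    rw [hPdef]
    refine prod_ne_zero_iff.mpr fun j _ => ?_
    split
    · exact pow_ne_zero _ (hx j)
    · exact one_ne_zero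
  have hM : M ≠ 0 := by
    rw [hMdef]
    refine prod_ne_zero_iff.mpr fun j _ => ?_
    split
    · exact pow_ne_zero _ (hx j)
    · exact one_ne_zero
  have hPM : (∏ m, x m ^ (B m k)) = P / M := by
    rw [hPdef, hMdef, ← prod_div_distrib]
    refine prod_congr rfl fun m _ => ?_
    rcases lt_trichotomy (B m k) 0 with h | h | h
    · rw [if_neg (by omega), if_pos h]
      have h1 : x m ^ (B m k) = x m ^ (-(((-(B m k)).toNat : ℤ))) := by
        congr 1; omega
      rw [h1, zpow_neg, zpow_natCast, one_div]
    · simp [h]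
    · rw [if_pos h, if_neg (by omega)]
      have h1 : x m ^ (B m k) = x m ^ (((B m k).toNat : ℤ)) := by
        congr 1; omega
      rw [h1, zpow_natCast, div_one]
  have hyk : yOf B ε x k = ε k * (P / M) := by
    simp only [yOf]; rw [hPM]
  have hS : ε k * P + M = M * (1 + yOf B ε x k) := by
    rw [hyk]; field_simp; ring
  have hSne : ε k * P + M ≠ 0 := by
    rw [hS]; exact mul_ne_zero hM h1y
  have hxk : mutX oplus B ε x k k = (ε k * P + M) / (oplus 1 (ε k) * x k) := by
    simp only [mutX, ↓reduceIte, ← hPdef, ← hMdef]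
    field_simp
  have hxkne : mutX oplus B ε x k k ≠ 0 := by
    rw [hxk]; exact div_ne_zero hSne (mul_ne_zero hop (hx k))
  have h1y' : 1 + ε k * (P / M) ≠ 0 := by rw [← hyk]; exact h1y
  constructor
  · -- the k-th coordinate
    have hprod : ∏ m, (mutX oplus B ε x k m) ^ (mutB B k m k) =
        (∏ m, x m ^ (B m k))⁻¹ := by
      rw [← prod_inv_distrib]
      refine prod_congr rfl fun m _ => ?_
      by_cases hm : m = k
      · rw [hm]
        have h1 : mutB B k k k = 0 := by simp [mutB, hBkk]
        rw [h1, hBkk]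
        simp
      · have h1 : mutB B k m k = -(B m k) := by simp [mutB]
        have h2 : mutX oplus B ε x k m = x m := by simp [mutX, hm]
        rw [h1, h2, zpow_neg]
    have hEk : mutE oplus B ε k k = (ε k)⁻¹ := by simp [mutE]
    simp only [yOf]
    rw [hEk, hprod, mul_inv]
  · intro i hik
    set Q : K := ∏ m ∈ univ.erase k, x m ^ (B m i) with hQdef
    have hQ : Q ≠ 0 := by
      rw [hQdef]
      exact prod_ne_zero_iff.mpr fun m _ => zpow_ne_zero _ (hx m)
    have hyi : yOf B ε x i = ε i * (x k ^ (B k i) * Q) := by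
      simp only [yOf]
      rw [← Finset.mul_prod_erase univ _ (mem_univ k)]
    have hPerase : P = ∏ m ∈ univ.erase k,
        (if 0 < B m k then x m ^ (B m k).toNat else 1) := by
      rw [hPdef]
      exact (Finset.prod_erase univ (by simp [hBkk])).symm
    have hMerase : M = ∏ m ∈ univ.erase k,
        (if B m k < 0 then x m ^ (-(B m k)).toNat else 1) := by
      rw [hMdef]
      exact (Finset.prod_erase univ (by simp [hBkk])).symm
    have hsplit : yOf (mutB B k) (mutE oplus B ε k) (mutX oplus B ε x k) i =
        mutE oplus B ε k i * ((mutX oplus B ε x k k) ^ (mutB B k k i) *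
          ∏ m ∈ univ.erase k, (x m) ^ (mutB B k m i)) := by
      simp only [yOf]
      rw [← Finset.mul_prod_erase univ _ (mem_univ k)]
      congr 1
      congr 1
      refine prod_congr rfl fun m hm => ?_
      have hmk : m ≠ k := Finset.ne_of_mem_erase hm
      rw [show mutX oplus B ε x k m = x m by simp [mutX, hmk]]
    constructor
    · intro hb
      set n : ℕ := (B k i).toNat with hndef
      have hn : B k i = (n : ℤ) := by omega
      have hmutBki : mutB B k k i = -(n : ℤ) := by
        have h1 : mutB B k k i = -B k i := by simp [mutB]
        rw [h1]; omega
      have hE : mutE oplus B ε k i = ε i * (ε k / oplus 1 (ε k)) ^ n := by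
        simp [mutE, hik, hb, hndef]
      have hprodE : ∏ m ∈ univ.erase k, (x m) ^ (mutB B k m i) = Q * P ^ n := by
        rw [hQdef, hPerase, ← prod_pow, ← prod_mul_distrib]
        refine prod_congr rfl fun m hm => ?_
        have hmk : m ≠ k := Finset.ne_of_mem_erase hm
        have hmB : mutB B k m i =
            B m i + (if 0 < B m k then ((B m k).toNat : ℤ) * n else 0) := by
          have hor : ¬(m = k ∨ i = k) := by push_neg; exact ⟨hmk, hik⟩
          simp only [mutB, if_neg hor]
          rcases lt_trichotomy (B m k) 0 with h | h | h
          · rw [if_neg (by omega), abs_of_neg h, abs_of_nonneg hb]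
            have h2 : -B m k * B k i + B m k * B k i = 2 * 0 := by ring
            rw [h2, Int.mul_ediv_cancel_left _ two_ne_zero]
          · simp [h]
          · rw [if_pos h, abs_of_pos h, abs_of_nonneg hb]
            have h2 : B m k * B k i + B m k * B k i = 2 * (B m k * B k i) := by ring
            rw [h2, Int.mul_ediv_cancel_left _ two_ne_zero]
            have h3 : ((B m k).toNat : ℤ) = B m k := by omega
            rw [h3, ← hn]
        rw [hmB, zpow_add₀ (hx m)]
        congr 1
        split_ifs with h
        · rw [show ((B m k).toNat : ℤ) * n = (((B m k).toNat * n : ℕ) : ℤ) by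
            push_cast; ring, zpow_natCast, pow_mul]
        · simp
      have key : (ε k / oplus 1 (ε k)) ^ n * ((mutX oplus B ε x k k) ^ n)⁻¹ * P ^ n
          = x k ^ n * (yOf B ε x k / (1 + yOf B ε x k)) ^ n := by
        rw [← inv_pow, ← mul_pow, ← mul_pow, ← mul_pow]
        congr 1
        rw [hxk, hyk, inv_div]
        field_simp [hSne]
        rw [add_comm M, mul_div_assoc, div_self hSne, mul_one]
      rw [hsplit, hE, hprodE, hmutBki, hyi, hn]
      rw [zpow_neg, zpow_natCast, zpow_natCast]
      linear_combination (ε i * Q) * key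
    · intro hb
      set n : ℕ := (-(B k i)).toNat with hndef
      have hn : B k i = -(n : ℤ) := by omega
      have hmutBki : mutB B k k i = (n : ℤ) := by
        have h1 : mutB B k k i = -B k i := by simp [mutB]
        rw [h1]; omega
      have hE : mutE oplus B ε k i = ε i * (oplus 1 (ε k)) ^ n := by
        rcases eq_or_lt_of_le hb with h0 | h0
        · have hn0 : n = 0 := by omega
          simp [mutE, hik, h0, hn0]
        · simp [mutE, hik, not_le_of_gt h0, hndef]
      have hprodE : ∏ m ∈ univ.erase k, (x m) ^ (mutB B k m i) = Q * (M ^ n)⁻¹ := by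
        rw [hQdef, hMerase, ← prod_pow, ← prod_inv_distrib, ← prod_mul_distrib]
        refine prod_congr rfl fun m hm => ?_
        have hmk : m ≠ k := Finset.ne_of_mem_erase hm
        have hmB : mutB B k m i =
            B m i + (if B m k < 0 then -(((-(B m k)).toNat : ℤ) * n) else 0) := by
          have hor : ¬(m = k ∨ i = k) := by push_neg; exact ⟨hmk, hik⟩
          simp only [mutB, if_neg hor]
          rcases lt_trichotomy (B m k) 0 with h | h | h
          · rw [if_pos h, abs_of_neg h, abs_of_nonpos hb]
            have h2 : -B m k * B k i + B m k * -B k i = 2 * (-(B m k * B k i)) := by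
              ring
            rw [h2, Int.mul_ediv_cancel_left _ two_ne_zero]
            have h3 : ((-(B m k)).toNat : ℤ) = -B m k := by omega
            have h4 : (n : ℤ) = -B k i := by omega
            rw [h3, h4]; ring
          · simp [h]
          · rw [if_neg (by omega), abs_of_pos h, abs_of_nonpos hb]
            have h2 : B m k * B k i + B m k * -B k i = 2 * 0 := by ring
            rw [h2, Int.mul_ediv_cancel_left _ two_ne_zero]
        rw [hmB, zpow_add₀ (hx m)]
        congr 1
        split_ifs with h
        · rw [show (((-(B m k)).toNat : ℤ) * n) = ((((-(B m k)).toNat * n : ℕ)) : ℤ) by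
            push_cast; ring, zpow_neg, zpow_natCast, pow_mul]
        · simp
      have key : (oplus 1 (ε k)) ^ n * (mutX oplus B ε x k k) ^ n * (M ^ n)⁻¹
          = ((x k) ^ n)⁻¹ * (1 + yOf B ε x k) ^ n := by
        rw [← inv_pow, ← inv_pow, ← mul_pow, ← mul_pow, ← mul_pow]
        congr 1
        rw [hxk, hyk]
        field_simp [hSne]
        ring
      rw [hsplit, hE, hprodE, hmutBki, hyi, hn]
      rw [zpow_neg, zpow_natCast, zpow_natCast]
      linear_combination (ε i * Q) * key
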